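/- Let L be a finite distributive lattice, ℓ ∈ L a join-irreducible element, f_ℓ the threshold function, M an mv-CGS over L, and f_ℓ(M) the reduction of M via f_ℓ to the two-element lattice {⊥,⊤}. Then for every state formula φ (resp. path formula γ) of mv-ATL* and every state q (resp. path λ): [[φ]]_{M,q} ≥ ℓ if and only if [[φ]]_{f_ℓ(M),q} = ⊤ (resp. [[γ]]_{M,λ} ≥ ℓ iff [[γ]]_{f_ℓ(M),λ} = ⊤). -/

import Mathlib

/-- A concurrent game structure (CGS): availability function `d` (with every
`d a q` nonempty) and a deterministic transition function `t`. -/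
structure CGS (Agt St Act : Type*) where
  d : Agt → St → Set Act
  d_nonempty : ∀ a q, (d a q).Nonempty
  t : St → (Agt → Act) → St

namespace CGS

variable {Agt St Act : Type*}

/-- An action profile `α` is available at state `q`. -/
def Avail (G : CGS Agt St Act) (q : St) (α : Agt → Act) : Prop :=
  ∀ a, α a ∈ G.d a q

/-- `lam` is a path of `G`: each step is realized by some available profile. -/
def IsPath (G : CGS Agt St Act) (lam : ℕ → St) : Prop :=
  ∀ i, ∃ α, G.Avail (lam i) α ∧ G.t (lam i) α = lam (i + 1)

/-- A perfect-recall strategy for agent `a`: a choice of an available action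
for every nonempty finite history, represented as (proper prefix, last state). -/
structure PRStrategy (G : CGS Agt St Act) (a : Agt) where
  act : List St → St → Act
  avail : ∀ h q, act h q ∈ G.d a q

/-- A collective perfect-recall strategy for the coalition `A`. -/
def PRColl (G : CGS Agt St Act) (A : Set Agt) := (a : A) → PRStrategy G (a : Agt)

/-- The outcome set of a collective perfect-recall strategy `s` from state `q`:
all paths starting at `q` consistent with `s`. -/
def prOut (G : CGS Agt St Act) {A : Set Agt} (q : St) (s : PRColl G A) : Set (ℕ → St) :=
  { lam | lam 0 = q ∧ ∀ i, ∃ α, G.Avail (lam i) α ∧ G.t (lam i) α = lam (i + 1) ∧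
      ∀ a : A, α (a : Agt) = (s a).act (List.ofFn fun j : Fin i => lam j) (lam i) }

end CGS

mutual
/-- State formulas of mv-ATL*. -/
inductive SForm (AP C Agt : Type) : Type
  | const : C → SForm AP C Agt
  | atom  : AP → SForm AP C Agt
  | and   : SForm AP C Agt → SForm AP C Agt → SForm AP C Agt
  | or    : SForm AP C Agt → SForm AP C Agt → SForm AP C Agt
  | coop  : Set Agt → PForm AP C Agt → SForm AP C Agt
  | nec   : Set Agt → PForm AP C Agt → SForm AP C Agt
/-- Path formulas of mv-ATL*. -/
inductive PForm (AP C Agt : Type) : Type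
  | state : SForm AP C Agt → PForm AP C Agt
  | and   : PForm AP C Agt → PForm AP C Agt → PForm AP C Agt
  | or    : PForm AP C Agt → PForm AP C Agt → PForm AP C Agt
  | next  : PForm AP C Agt → PForm AP C Agt
  | untl  : PForm AP C Agt → PForm AP C Agt → PForm AP C Agt
  | wuntl : PForm AP C Agt → PForm AP C Agt → PForm AP C Agt
end

variable {Agt St Act AP C : Type} {L : Type*} [CompleteLattice L]

mutual
/-- Multi-valued truth value of a state formula at a state. -/
noncomputable def sval (G : CGS Agt St Act) (σ : C → L) (V : AP → St → L) :
    SForm AP C Agt → St → L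
  | .const c, _ => σ c
  | .atom p, q => V p q
  | .and φ ψ, q => sval G σ V φ q ⊓ sval G σ V ψ q
  | .or φ ψ, q => sval G σ V φ q ⊔ sval G σ V ψ q
  | .coop A γ, q => ⨆ s : CGS.PRColl G A, ⨅ lam ∈ CGS.prOut G q s, pval G σ V γ lam
  | .nec A γ, q => ⨅ s : CGS.PRColl G A, ⨆ lam ∈ CGS.prOut G q s, pval G σ V γ lam

/-- Multi-valued truth value of a path formula on a path. -/
noncomputable def pval (G : CGS Agt St Act) (σ : C → L) (V : AP → St → L) :
    PForm AP C Agt → (ℕ → St) → L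
  | .state φ, lam => sval G σ V φ (lam 0)
  | .and γ δ, lam => pval G σ V γ lam ⊓ pval G σ V δ lam
  | .or γ δ, lam => pval G σ V γ lam ⊔ pval G σ V δ lam
  | .next γ, lam => pval G σ V γ (fun k => lam (k + 1))
  | .untl γ δ, lam =>
      ⨆ i : ℕ, (pval G σ V δ (fun k => lam (k + i)) ⊓
        ⨅ j : Fin i, pval G σ V γ (fun k => lam (k + (j : ℕ))))
  | .wuntl γ δ, lam =>
      (⨅ i : ℕ, pval G σ V γ (fun k => lam (k + i))) ⊔
      ⨆ i : ℕ, (pval G σ V δ (fun k => lam (k + i)) ⊓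
        ⨅ j : Fin i, pval G σ V γ (fun k => lam (k + (j : ℕ))))
end

/-- A join-irreducible element of a lattice with bottom. -/
def JoinIrred {L : Type*} [Lattice L] [OrderBot L] (ℓ : L) : Prop :=
  ℓ ≠ ⊥ ∧ ∀ x y : L, ℓ = x ⊔ y → ℓ = x ∨ ℓ = y


section Aux

variable {L : Type*} [CompleteLattice L] [Fintype L]

theorem prime2 (hdistrib : ∀ x y z : L, x ⊓ (y ⊔ z) = (x ⊓ y) ⊔ (x ⊓ z))
    {ℓ : L} (hℓ : JoinIrred ℓ) {x y : L} (h : ℓ ≤ x ⊔ y) : ℓ ≤ x ∨ ℓ ≤ y := by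
  have key : ℓ = (ℓ ⊓ x) ⊔ (ℓ ⊓ y) := by
    rw [← hdistrib]; exact (inf_eq_left.2 h).symm
  rcases hℓ.2 _ _ key with h' | h'
  · exact Or.inl (h' ▸ inf_le_right)
  · exact Or.inr (h' ▸ inf_le_right)

theorem prime_sSup (hdistrib : ∀ x y z : L, x ⊓ (y ⊔ z) = (x ⊓ y) ⊔ (x ⊓ z))
    {ℓ : L} (hℓ : JoinIrred ℓ) (S : Set L) :
    ℓ ≤ sSup S ↔ ∃ s ∈ S, ℓ ≤ s := by
  constructor
  · refine Set.Finite.induction_on (motive := fun T _ => ℓ ≤ sSup T → ∃ s ∈ T, ℓ ≤ s)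
      S (Set.toFinite S) ?_ ?_
    · intro h
      simp only [sSup_empty, le_bot_iff] at h
      exact absurd h hℓ.1
    · intro a T _ _ ih h
      rw [sSup_insert] at h
      rcases prime2 hdistrib hℓ h with h' | h'
      · exact ⟨_, Set.mem_insert _ _, h'⟩
      · obtain ⟨s, hs, hls⟩ := ih h'
        exact ⟨s, Set.mem_insert_of_mem _ hs, hls⟩
  · rintro ⟨s, hs, h⟩; exact h.trans (le_sSup hs)

theorem prime_iSup (hdistrib : ∀ x y z : L, x ⊓ (y ⊔ z) = (x ⊓ y) ⊔ (x ⊓ z))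
    {ℓ : L} (hℓ : JoinIrred ℓ) {ι : Sort*} (x : ι → L) :
    ℓ ≤ ⨆ i, x i ↔ ∃ i, ℓ ≤ x i := by
  rw [iSup, prime_sSup hdistrib hℓ]
  constructor
  · rintro ⟨s, ⟨i, rfl⟩, h⟩; exact ⟨i, h⟩
  · rintro ⟨i, h⟩; exact ⟨x i, ⟨i, rfl⟩, h⟩

variable {Agt St Act AP C : Type}

mutual

theorem auxS (hdistrib : ∀ x y z : L, x ⊓ (y ⊔ z) = (x ⊓ y) ⊔ (x ⊓ z))
    {ℓ : L} (hℓ : JoinIrred ℓ)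
    (G : CGS Agt St Act) (σ : C → L) (V : AP → St → L)
    (φ : SForm AP C Agt) (q : St) :
    ℓ ≤ sval G σ V φ q ↔
      sval G (fun c => (ℓ ≤ σ c : Prop)) (fun p q' => (ℓ ≤ V p q' : Prop)) φ q := by
  cases φ with
  | const c => simp [sval]
  | atom p => simp [sval]
  | and φ ψ =>
    simp only [sval, le_inf_iff, inf_Prop_eq]
    rw [auxS hdistrib hℓ G σ V φ q, auxS hdistrib hℓ G σ V ψ q]
  | or φ ψ =>
    simp only [sval, sup_Prop_eq]
    constructor
    · intro h
      rcases prime2 hdistrib hℓ h with h | h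
      · exact Or.inl ((auxS hdistrib hℓ G σ V φ q).1 h)
      · exact Or.inr ((auxS hdistrib hℓ G σ V ψ q).1 h)
    · rintro (h | h)
      · exact le_sup_of_le_left ((auxS hdistrib hℓ G σ V φ q).2 h)
      · exact le_sup_of_le_right ((auxS hdistrib hℓ G σ V ψ q).2 h)
  | coop A γ =>
    simp only [sval, prime_iSup hdistrib hℓ, iSup_Prop_eq, le_iInf_iff, iInf_Prop_eq]
    refine exists_congr fun s => forall_congr' fun lam => forall_congr' fun _ => ?_
    exact auxP hdistrib hℓ G σ V γ lam
  | nec A γ =>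
    simp only [sval, le_iInf_iff, iInf_Prop_eq, prime_iSup hdistrib hℓ, iSup_Prop_eq]
    refine forall_congr' fun s => exists_congr fun lam => exists_congr fun _ => ?_
    exact auxP hdistrib hℓ G σ V γ lam

theorem auxP (hdistrib : ∀ x y z : L, x ⊓ (y ⊔ z) = (x ⊓ y) ⊔ (x ⊓ z))
    {ℓ : L} (hℓ : JoinIrred ℓ)
    (G : CGS Agt St Act) (σ : C → L) (V : AP → St → L)
    (γ : PForm AP C Agt) (lam : ℕ → St) :
    ℓ ≤ pval G σ V γ lam ↔
      pval G (fun c => (ℓ ≤ σ c : Prop)) (fun p q' => (ℓ ≤ V p q' : Prop)) γ lam := by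
  cases γ with
  | state φ => exact auxS hdistrib hℓ G σ V φ (lam 0)
  | and γ δ =>
    simp only [pval, le_inf_iff, inf_Prop_eq]
    rw [auxP hdistrib hℓ G σ V γ lam, auxP hdistrib hℓ G σ V δ lam]
  | or γ δ =>
    simp only [pval, sup_Prop_eq]
    constructor
    · intro h
      rcases prime2 hdistrib hℓ h with h | h
      · exact Or.inl ((auxP hdistrib hℓ G σ V γ lam).1 h)
      · exact Or.inr ((auxP hdistrib hℓ G σ V δ lam).1 h)
    · rintro (h | h)
      · exact le_sup_of_le_left ((auxP hdistrib hℓ G σ V γ lam).2 h)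
      · exact le_sup_of_le_right ((auxP hdistrib hℓ G σ V δ lam).2 h)
  | next γ => exact auxP hdistrib hℓ G σ V γ _
  | untl γ δ =>
    simp only [pval, prime_iSup hdistrib hℓ, iSup_Prop_eq, le_inf_iff, inf_Prop_eq,
      le_iInf_iff, iInf_Prop_eq]
    refine exists_congr fun i => and_congr ?_ (forall_congr' fun j => ?_)
    · exact auxP hdistrib hℓ G σ V δ _
    · exact auxP hdistrib hℓ G σ V γ _
  | wuntl γ δ =>
    simp only [pval, sup_Prop_eq]
    have h1 : ℓ ≤ (⨅ i : ℕ, pval G σ V γ (fun k => lam (k + i))) ↔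
        (⨅ i : ℕ, pval G (fun c => (ℓ ≤ σ c : Prop)) (fun p q' => (ℓ ≤ V p q' : Prop)) γ
          (fun k => lam (k + i)) : Prop) := by
      simp only [le_iInf_iff, iInf_Prop_eq]
      exact forall_congr' fun i => auxP hdistrib hℓ G σ V γ _
    have h2 : ℓ ≤ (⨆ i : ℕ, (pval G σ V δ (fun k => lam (k + i)) ⊓
          ⨅ j : Fin i, pval G σ V γ (fun k => lam (k + (j : ℕ))))) ↔
        (⨆ i : ℕ, (pval G (fun c => (ℓ ≤ σ c : Prop)) (fun p q' => (ℓ ≤ V p q' : Prop)) δ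
            (fun k => lam (k + i)) ⊓
          ⨅ j : Fin i, pval G (fun c => (ℓ ≤ σ c : Prop)) (fun p q' => (ℓ ≤ V p q' : Prop)) γ
            (fun k => lam (k + (j : ℕ)))) : Prop) := by
      simp only [prime_iSup hdistrib hℓ, iSup_Prop_eq, le_inf_iff, inf_Prop_eq,
        le_iInf_iff, iInf_Prop_eq]
      refine exists_congr fun i => and_congr ?_ (forall_congr' fun j => ?_)
      · exact auxP hdistrib hℓ G σ V δ _
      · exact auxP hdistrib hℓ G σ V γ _
    constructor
    · intro h
      rcases prime2 hdistrib hℓ h with h | h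
      · exact Or.inl (h1.1 h)
      · exact Or.inr (h2.1 h)
    · rintro (h | h)
      · exact le_sup_of_le_left (h1.2 h)
      · exact le_sup_of_le_right (h2.2 h)

end

end Aux

/-- Corollary for threshold reductions: for a join-irreducible `ℓ` of a finite
distributive lattice, `[[φ]]_{M,ξ} ≥ ℓ` iff `[[φ]]_{f_ℓ(M),ξ} = ⊤`, where the
two-element lattice is realized as `Prop` and `f_ℓ x = (ℓ ≤ x)`. -/
theorem stmt_13 {L : Type*} [CompleteLattice L] [Fintype L]
    (hdistrib : ∀ x y z : L, x ⊓ (y ⊔ z) = (x ⊓ y) ⊔ (x ⊓ z))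
    (ℓ : L) (hℓ : JoinIrred ℓ)
    {Agt St Act AP C : Type} [Fintype Agt] [Fintype St] [Fintype Act]
    [Nonempty Agt] [Nonempty St] [Nonempty Act]
    (G : CGS Agt St Act) (σ : C → L) (V : AP → St → L) :
    (∀ (φ : SForm AP C Agt) (q : St),
      ℓ ≤ sval G σ V φ q ↔
        sval G (fun c => (ℓ ≤ σ c : Prop)) (fun p q' => (ℓ ≤ V p q' : Prop)) φ q = (⊤ : Prop)) ∧
    (∀ (γ : PForm AP C Agt) (lam : ℕ → St), G.IsPath lam →
      (ℓ ≤ pval G σ V γ lam ↔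
        pval G (fun c => (ℓ ≤ σ c : Prop)) (fun p q' => (ℓ ≤ V p q' : Prop)) γ lam = (⊤ : Prop))) := by
  constructor
  · intro φ q
    rw [auxS hdistrib hℓ G σ V φ q]
    simp [eq_iff_iff]
  · intro γ lam _
    rw [auxP hdistrib hℓ G σ V γ lam]
    simp [eq_iff_iff]
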